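/- For every t, OM(t) ≤ M(t) ≤ OM(2t), where M(t) is the largest k such that every graph of chromatic number at least t has a K_k-minor, and OM(t) is the largest k such that for every graph G with χ(G) ≥ t, the all-negative signed graph (G, -) has a (K_k, -)-minor. -/

import Mathlib

/-- A signed (multi)graph: an edge set with endpoints (an unordered pair,
possibly a loop) and a sign for each edge (`neg e = true` means `e` is negative). -/
structure SGraph (V : Type) where
  E : Type
  ends : E → Sym2 V
  neg : E → Bool

namespace SGraph

variable {V W : Type}

/-- Walks in a signed multigraph, recorded as sequences of edges. -/
inductive Walk (G : SGraph V) : V → V → Type where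
  | nil {v : V} : Walk G v v
  | cons {u v w : V} (e : G.E) (h : G.ends e = s(u, v)) (p : Walk G v w) : Walk G u w

namespace Walk

variable {G : SGraph V}

/-- The list of edges of a walk. -/
def edges : {u v : V} → G.Walk u v → List G.E
  | _, _, .nil => []
  | _, _, .cons e _ p => e :: p.edges

/-- The list of vertices visited by a walk (in order, with repetitions). -/
def support : {u v : V} → G.Walk u v → List V
  | u, _, .nil => [u]
  | u, _, .cons _ _ p => u :: p.support

/-- A walk is negative if it uses an odd number of negative edges
(its sign, the product of the signs of its edges with multiplicity, is `-1`). -/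
def isNeg {u v : V} (p : G.Walk u v) : Bool :=
  (p.edges.map G.neg).foldr Bool.xor false

/-- A closed walk is a cycle if it has at least one edge, no repeated edge,
and no repeated vertex (except the initial vertex which is also final). -/
def IsCycle {v : V} (p : G.Walk v v) : Prop :=
  p.edges ≠ [] ∧ p.edges.Nodup ∧ p.support.tail.Nodup

/-- The internal vertices of a walk. -/
def inner {u v : V} (p : G.Walk u v) : List V :=
  p.support.tail.dropLast

end Walk

/-- A set of vertices is balanced if it induces no negative cycle. -/
def BalancedSet (G : SGraph V) (X : Set V) : Prop :=
  ∀ (v : V) (p : G.Walk v v), p.IsCycle → (∀ u ∈ p.support, u ∈ X) → p.isNeg = false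

/-- A signed graph is balanced if it contains no negative cycle. -/
def IsBalanced (G : SGraph V) : Prop := G.BalancedSet Set.univ

/-- The signed graph has a negative loop. -/
def HasNegLoop (G : SGraph V) : Prop :=
  ∃ e : G.E, (∃ v : V, G.ends e = s(v, v)) ∧ G.neg e = true

/-- The signed graph has a positive loop. -/
def HasPosLoop (G : SGraph V) : Prop :=
  ∃ e : G.E, (∃ v : V, G.ends e = s(v, v)) ∧ G.neg e = false

/-- A balanced `k`-coloring: a partition of the vertices into `k` balanced color classes. -/
def ColorableB (G : SGraph V) (k : ℕ) : Prop :=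
  ∃ c : V → Fin k, ∀ i : Fin k, G.BalancedSet {v | c v = i}

/-- The balanced chromatic number. -/
noncomputable def chromNumB (G : SGraph V) : ℕ∞ :=
  ⨅ n ∈ {n : ℕ | G.ColorableB n}, (n : ℕ∞)

/-- Switching at the set of vertices where `s` is `true`: the sign of an edge is
multiplied by `-1` once for each of its endpoints (with multiplicity) in the set;
thus an edge with exactly one endpoint in the set changes sign, and loops are unchanged. -/
def switch (G : SGraph V) (s : V → Bool) : SGraph V where
  E := G.E
  ends := G.ends
  neg e := Bool.xor (G.neg e)
    (Sym2.lift ⟨fun u v => Bool.xor (s u) (s v), fun u v => Bool.xor_comm _ _⟩ (G.ends e))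

/-- The negation of a signature. -/
def negate (G : SGraph V) : SGraph V where
  E := G.E
  ends := G.ends
  neg e := !(G.neg e)

/-- A set of vertices is connected via positive edges inside itself. -/
def PosConnected (G : SGraph V) (B : Set V) : Prop :=
  B.Nonempty ∧ ∀ u ∈ B, ∀ v ∈ B, ∃ p : G.Walk u v,
    (∀ x ∈ p.support, x ∈ B) ∧ ∀ e ∈ p.edges, G.neg e = false

/-- `H` is a minor of `G`: after a suitable switching of `G`, there are disjoint
branch sets (each connected via positive edges) for the vertices of `H`, and
distinct edges of `G`, with the correct signs, realizing the edges of `H`. -/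
def IsMinor (H : SGraph W) (G : SGraph V) : Prop :=
  ∃ s : V → Bool, ∃ B : W → Set V,
    (∀ x : W, (G.switch s).PosConnected (B x)) ∧
    (Pairwise fun x y => Disjoint (B x) (B y)) ∧
    ∃ η : H.E → G.E, Function.Injective η ∧
      ∀ (e : H.E) (x y : W), H.ends e = s(x, y) →
        (G.switch s).neg (η e) = H.neg e ∧
        ∃ u v : V, G.ends (η e) = s(u, v) ∧ u ∈ B x ∧ v ∈ B y

/-- A homomorphism of signed graphs: after a suitable switching of the source,
a map of vertices and edges preserving incidences and signs. -/
def HomTo (G : SGraph V) (H : SGraph W) : Prop :=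
  ∃ s : V → Bool, ∃ f : V → W, ∃ g : G.E → H.E,
    ∀ (e : G.E) (u v : V), G.ends e = s(u, v) →
      H.ends (g e) = s(f u, f v) ∧ H.neg (g e) = (G.switch s).neg e

/-- A subdivision of `H` is isomorphic to a subgraph of `G` (signs ignored):
an injection of the vertices of `H` together with internally disjoint,
edge-disjoint paths of `G` realizing the edges of `H`. -/
def IsSubdivisionOf (H : SGraph W) (G : SGraph V) : Prop :=
  ∃ (φ : W → V) (ep : H.E → W × W),
    Function.Injective φ ∧
    (∀ e : H.E, H.ends e = s((ep e).1, (ep e).2)) ∧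
    ∃ P : (e : H.E) → G.Walk (φ (ep e).1) (φ (ep e).2),
      (∀ e, (P e).support.Nodup) ∧
      (∀ e f, e ≠ f → ∀ x ∈ (P e).inner, x ∉ (P f).support) ∧
      (∀ e, ∀ x ∈ (P e).inner, x ∉ Set.range φ) ∧
      (∀ e f, e ≠ f → ∀ g ∈ (P e).edges, g ∉ (P f).edges)

/-- `H` is a total topological minor of `G`: a subdivision of `H` occurs as a
subgraph of `G` in which the path representing each edge `e` of `H` has sign
exactly the sign of `e`. -/
def IsTotalTopMinor (H : SGraph W) (G : SGraph V) : Prop :=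
  ∃ (φ : W → V) (ep : H.E → W × W),
    Function.Injective φ ∧
    (∀ e : H.E, H.ends e = s((ep e).1, (ep e).2)) ∧
    ∃ P : (e : H.E) → G.Walk (φ (ep e).1) (φ (ep e).2),
      (∀ e, (P e).support.Nodup) ∧
      (∀ e f, e ≠ f → ∀ x ∈ (P e).inner, x ∉ (P f).support) ∧
      (∀ e, ∀ x ∈ (P e).inner, x ∉ Set.range φ) ∧
      (∀ e f, e ≠ f → ∀ g ∈ (P e).edges, g ∉ (P f).edges) ∧
      (∀ e, (P e).isNeg = H.neg e)

/-- `H` is a topological minor of `G`: some subdivision of `H` occurs as a subgraph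
of `G` in which every cycle of `H` keeps its sign; equivalently, after a suitable
switching of `H`, `H` is a total topological minor of `G`. -/
def IsTopMinor (H : SGraph W) (G : SGraph V) : Prop :=
  ∃ s : W → Bool, (H.switch s).IsTotalTopMinor G

end SGraph

open SGraph

/-- The signed graph `G̃` obtained from a graph `G` by replacing each edge by a
pair of parallel edges, one positive and one negative. -/
def SimpleGraph.tildeS {V : Type} (G : SimpleGraph V) : SGraph V where
  E := G.edgeSet × Bool
  ends e := (e.1 : Sym2 V)
  neg e := e.2

/-- The all-negative signed graph `(G, -)` on a graph `G`. -/
def SimpleGraph.allNeg {V : Type} (G : SimpleGraph V) : SGraph V where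
  E := G.edgeSet
  ends e := (e : Sym2 V)
  neg _ := true

/-- `K̃_k`: the signed graph on `k` vertices with a positive and a negative edge
between each pair of distinct vertices. -/
def tildeK (k : ℕ) : SGraph (Fin k) := (⊤ : SimpleGraph (Fin k)).tildeS

/-- `(K_k, -)`: the all-negative complete signed graph on `k` vertices. -/
def allNegK (k : ℕ) : SGraph (Fin k) := (⊤ : SimpleGraph (Fin k)).allNeg

/-- `K̃_k⁺`: as `K̃_k`, with in addition a positive loop at every vertex. -/
def tildeKplus (k : ℕ) : SGraph (Fin k) where
  E := ((⊤ : SimpleGraph (Fin k)).edgeSet × Bool) ⊕ Fin k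
  ends := Sum.elim (fun e => (e.1 : Sym2 (Fin k))) (fun i => s(i, i))
  neg := Sum.elim (fun e => e.2) (fun _ => false)

/-- `G` has a `K_k`-minor: `k` disjoint connected branch sets, pairwise joined by an edge. -/
def SimpleGraph.HasCliqueMinor {V : Type} (G : SimpleGraph V) (k : ℕ) : Prop :=
  ∃ T : Fin k → G.Subgraph,
    (∀ i, (T i).coe.Connected) ∧
    (Pairwise fun i j => Disjoint (T i).verts (T j).verts) ∧
    ∀ i j, i ≠ j → ∃ u v, G.Adj u v ∧ u ∈ (T i).verts ∧ v ∈ (T j).verts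

/-- `G` has an odd-`K_k`-minor: a 2-coloring of the vertices together with `k`
disjoint trees, all of whose edges are properly colored, pairwise joined by a
monochromatic edge. -/
def SimpleGraph.HasOddCliqueMinor {V : Type} (G : SimpleGraph V) (k : ℕ) : Prop :=
  ∃ c : V → Bool, ∃ T : Fin k → G.Subgraph,
    (∀ i, (T i).coe.IsTree) ∧
    (Pairwise fun i j => Disjoint (T i).verts (T j).verts) ∧
    (∀ i, ∀ u v, (T i).Adj u v → c u ≠ c v) ∧
    ∀ i j, i ≠ j →
      ∃ u v, G.Adj u v ∧ u ∈ (T i).verts ∧ v ∈ (T j).verts ∧ c u = c v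

/-- `G` has an even-odd-`K_k`-minor: as an odd-`K_k`-minor, with in addition a
properly colored edge between each pair of distinct trees. -/
def SimpleGraph.HasEvenOddCliqueMinor {V : Type} (G : SimpleGraph V) (k : ℕ) : Prop :=
  ∃ c : V → Bool, ∃ T : Fin k → G.Subgraph,
    (∀ i, (T i).coe.IsTree) ∧
    (Pairwise fun i j => Disjoint (T i).verts (T j).verts) ∧
    (∀ i, ∀ u v, (T i).Adj u v → c u ≠ c v) ∧
    ∀ i j, i ≠ j →
      (∃ u v, G.Adj u v ∧ u ∈ (T i).verts ∧ v ∈ (T j).verts ∧ c u = c v) ∧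
      (∃ u v, G.Adj u v ∧ u ∈ (T i).verts ∧ v ∈ (T j).verts ∧ c u ≠ c v)

/-- The fractional chromatic number of a finite graph: the infimum total weight of
a system of nonnegative weights on independent sets covering every vertex with
total weight at least 1. -/
noncomputable def SimpleGraph.fracChrom {V : Type} [Fintype V] [DecidableEq V]
    (G : SimpleGraph V) : ℝ :=
  sInf {r : ℝ | ∃ w : Finset V → ℝ, (∀ A, 0 ≤ w A) ∧
    (∀ A : Finset V, w A ≠ 0 → (∀ u ∈ A, ∀ v ∈ A, ¬G.Adj u v)) ∧
    (∀ v : V, 1 ≤ ∑ A : Finset V, if v ∈ A then w A else 0) ∧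
    ∑ A : Finset V, w A ≤ r}

/-- The fractional balanced chromatic number of a finite signed graph: the infimum
total weight of a system of nonnegative weights on balanced sets covering every
vertex with total weight at least 1. -/
noncomputable def SGraph.fracChromB {V : Type} [Fintype V] [DecidableEq V]
    (G : SGraph V) : ℝ :=
  sInf {r : ℝ | ∃ w : Finset V → ℝ, (∀ A, 0 ≤ w A) ∧
    (∀ A : Finset V, w A ≠ 0 → G.BalancedSet ↑A) ∧
    (∀ v : V, 1 ≤ ∑ A : Finset V, if v ∈ A then w A else 0) ∧
    ∑ A : Finset V, w A ≤ r}

/-- `M(t)`: the largest `k` such that every graph of chromatic number at least `t`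
has a `K_k`-minor. -/
noncomputable def M (t : ℕ) : ℕ :=
  sSup {k : ℕ | ∀ (m : ℕ) (G : SimpleGraph (Fin m)),
    (t : ℕ∞) ≤ G.chromaticNumber → G.HasCliqueMinor k}

/-- `OM(t)`: the largest `k` such that for every graph `G` with `χ(G) ≥ t`, the
all-negative signed graph `(G, -)` has a `(K_k, -)`-minor. -/
noncomputable def OM (t : ℕ) : ℕ :=
  sSup {k : ℕ | ∀ (m : ℕ) (G : SimpleGraph (Fin m)),
    (t : ℕ∞) ≤ G.chromaticNumber → (allNegK k).IsMinor G.allNeg}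

namespace SGraph
namespace Walk

variable {V : Type} {G : SGraph V}

/-- Concatenation of walks. -/
def append : {u v w : V} → G.Walk u v → G.Walk v w → G.Walk u w
  | _, _, _, .nil, q => q
  | _, _, _, .cons e h p, q => .cons e h (p.append q)

lemma start_mem_support : ∀ {u v : V} (p : G.Walk u v), u ∈ p.support
  | _, _, .nil => List.mem_singleton.2 rfl
  | _, _, .cons _ _ _ => List.mem_cons_self

lemma end_mem_support : ∀ {u v : V} (p : G.Walk u v), v ∈ p.support
  | _, _, .nil => List.mem_singleton.2 rfl
  | _, _, .cons _ _ p => List.mem_cons_of_mem _ (end_mem_support p)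

lemma mem_support_append {x : V} : ∀ {u v w : V} (p : G.Walk u v) (q : G.Walk v w),
    x ∈ (p.append q).support → x ∈ p.support ∨ x ∈ q.support
  | _, _, _, .nil, q => fun h => Or.inr h
  | _, _, _, .cons e he p, q => fun h => by
      rcases List.mem_cons.1 h with h | h
      · exact Or.inl (h ▸ List.mem_cons_self)
      · rcases mem_support_append p q h with h | h
        · exact Or.inl (List.mem_cons_of_mem _ h)
        · exact Or.inr h

lemma mem_edges_append {x : G.E} : ∀ {u v w : V} (p : G.Walk u v) (q : G.Walk v w),
    x ∈ (p.append q).edges → x ∈ p.edges ∨ x ∈ q.edges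
  | _, _, _, .nil, q => fun h => Or.inr h
  | _, _, _, .cons e he p, q => fun h => by
      rcases List.mem_cons.1 h with h | h
      · exact Or.inl (h ▸ List.mem_cons_self)
      · rcases mem_edges_append p q h with h | h
        · exact Or.inl (List.mem_cons_of_mem _ h)
        · exact Or.inr h

end Walk

/-- Existence of a walk inside `B` using only positive edges. -/
def HasGoodWalk (G : SGraph V) (B : Set V) (u v : V) : Prop :=
  ∃ p : G.Walk u v, (∀ x ∈ p.support, x ∈ B) ∧ ∀ e ∈ p.edges, G.neg e = false

lemma HasGoodWalk.trans {G : SGraph V} {B : Set V} {u v w : V}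
    (h1 : G.HasGoodWalk B u v) (h2 : G.HasGoodWalk B v w) : G.HasGoodWalk B u w := by
  obtain ⟨p, hps, hpe⟩ := h1
  obtain ⟨q, hqs, hqe⟩ := h2
  refine ⟨p.append q, fun x hx => ?_, fun e he => ?_⟩
  · rcases Walk.mem_support_append p q hx with h | h
    exacts [hps x h, hqs x h]
  · rcases Walk.mem_edges_append p q he with h | h
    exacts [hpe e h, hqe e h]

lemma HasGoodWalk.mono {G : SGraph V} {B B' : Set V} {u v : V} (hB : B ⊆ B')
    (h : G.HasGoodWalk B u v) : G.HasGoodWalk B' u v := by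
  obtain ⟨p, hps, hpe⟩ := h
  exact ⟨p, fun x hx => hB (hps x hx), hpe⟩

lemma hasGoodWalk_refl {G : SGraph V} {B : Set V} {u : V} (hu : u ∈ B) :
    G.HasGoodWalk B u u :=
  ⟨.nil, fun x hx => by simpa using (List.mem_singleton.1 hx) ▸ hu, by simp [Walk.edges]⟩

lemma hasGoodWalk_single {G : SGraph V} {B : Set V} {u v : V} (hu : u ∈ B) (hv : v ∈ B)
    (e : G.E) (he : G.ends e = s(u, v)) (hneg : G.neg e = false) :
    G.HasGoodWalk B u v := by
  refine ⟨.cons e he .nil, fun x hx => ?_, fun f hf => ?_⟩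
  · rcases List.mem_cons.1 hx with h | h
    · exact h ▸ hu
    · simpa using (List.mem_singleton.1 h) ▸ hv
  · simp only [Walk.edges, List.mem_cons, List.not_mem_nil, or_false] at hf
    exact hf ▸ hneg

lemma posConnected_of_goodWalks {G : SGraph V} {B : Set V} (hne : B.Nonempty)
    (h : ∀ u ∈ B, ∀ v ∈ B, G.HasGoodWalk B u v) : G.PosConnected B :=
  ⟨hne, fun u hu v hv => h u hu v hv⟩

end SGraph
section LemmaA

variable {V : Type}

/-- The subgraph induced on a vertex set. -/
def brSub (G : SimpleGraph V) (B : Set V) : G.Subgraph where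
  verts := B
  Adj a b := G.Adj a b ∧ a ∈ B ∧ b ∈ B
  adj_sub h := h.1
  edge_vert h := h.2.1
  symm := ⟨fun a b ⟨h, ha, hb⟩ => ⟨h.symm, hb, ha⟩⟩

lemma allNeg_switch_ends_eq {G : SimpleGraph V} {s : V → Bool}
    (e : (G.allNeg.switch s).E) : (G.allNeg.switch s).ends e = (e : G.edgeSet).1 := rfl

lemma adj_of_switch_ends {G : SimpleGraph V} {s : V → Bool} {u w : V}
    (e : (G.allNeg.switch s).E) (he : (G.allNeg.switch s).ends e = s(u, w)) : G.Adj u w := by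
  refine (G.mem_edgeSet).1 ?_
  have h2 : (e : G.edgeSet).1 ∈ G.edgeSet := (e : G.edgeSet).2
  rwa [← allNeg_switch_ends_eq e, he] at h2

lemma brSub_reach {G : SimpleGraph V} {B : Set V} {s : V → Bool} :
    ∀ {u v : V} (p : (G.allNeg.switch s).Walk u v), (∀ x ∈ p.support, x ∈ B) →
      ∀ (hu : u ∈ B) (hv : v ∈ B), (brSub G B).coe.Reachable ⟨u, hu⟩ ⟨v, hv⟩ := by
  intro u v p
  induction p with
  | nil => intro _ hu hv; exact SimpleGraph.Reachable.refl _
  | @cons u w v e he p ih =>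
      intro hp hu hv
      have hw : w ∈ B := hp w (List.mem_cons_of_mem _ (SGraph.Walk.start_mem_support p))
      have h1 : (brSub G B).coe.Adj ⟨u, hu⟩ ⟨w, hw⟩ := ⟨adj_of_switch_ends e he, hu, hw⟩
      refine h1.reachable.trans (ih ?_ hw hv)
      intro x hx; exact hp x (List.mem_cons_of_mem _ hx)

lemma cliqueMinor_of_allNeg_minor {G : SimpleGraph V} {k : ℕ}
    (h : (allNegK k).IsMinor G.allNeg) : G.HasCliqueMinor k := by
  obtain ⟨s, B, hconn, hdisj, η, hinj, hη⟩ := h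
  refine ⟨fun i => brSub G (B i), fun i => ?_, ?_, ?_⟩
  · obtain ⟨⟨u0, hu0⟩, hwalks⟩ := hconn i
    rw [SimpleGraph.connected_iff]
    refine ⟨?_, ⟨⟨u0, hu0⟩⟩⟩
    rintro ⟨a, ha⟩ ⟨b, hb⟩
    obtain ⟨p, hps, -⟩ := hwalks a ha b hb
    exact brSub_reach p hps ha hb
  · exact hdisj
  · intro i j hij
    have hadj : (⊤ : SimpleGraph (Fin k)).Adj i j := hij
    have hmem : s(i, j) ∈ (⊤ : SimpleGraph (Fin k)).edgeSet := (SimpleGraph.mem_edgeSet _).2 hadj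
    obtain ⟨-, u, v, hends, hu, hv⟩ := hη ⟨s(i, j), hmem⟩ i j rfl
    refine ⟨u, v, (G.mem_edgeSet).1 ?_, hu, hv⟩
    have h2 : (η ⟨s(i, j), hmem⟩ : G.edgeSet).1 ∈ G.edgeSet := (η ⟨s(i, j), hmem⟩ : G.edgeSet).2
    have h3 : (η ⟨s(i, j), hmem⟩ : G.edgeSet).1 = s(u, v) := hends
    rwa [h3] at h2

end LemmaA
section Bounds

lemma cliqueMinor_card_le {n k : ℕ} {G : SimpleGraph (Fin n)} (h : G.HasCliqueMinor k) :
    k ≤ n := by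
  obtain ⟨T, hconn, hdisj, -⟩ := h
  have hne : ∀ i, ∃ v, v ∈ (T i).verts := by
    intro i
    obtain ⟨⟨v, hv⟩⟩ := (hconn i).nonempty
    exact ⟨v, hv⟩
  choose f hf using hne
  have hinj : Function.Injective f := by
    intro i j hij
    by_contra hne'
    exact Set.disjoint_left.1 (hdisj hne') (hf i) (hij ▸ hf j)
  simpa using Fintype.card_le_of_injective f hinj

lemma allNegMinor_card_le {n k : ℕ} {G : SimpleGraph (Fin n)}
    (h : (allNegK k).IsMinor G.allNeg) : k ≤ n :=
  cliqueMinor_card_le (cliqueMinor_of_allNeg_minor h)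

lemma zero_mem_M_set (t : ℕ) : 0 ∈ {k : ℕ | ∀ (m : ℕ) (G : SimpleGraph (Fin m)),
    (t : ℕ∞) ≤ G.chromaticNumber → G.HasCliqueMinor k} := by
  intro m G _
  exact ⟨fun i => i.elim0, fun i => i.elim0, fun i => i.elim0, fun i => i.elim0⟩

lemma zero_mem_OM_set (t : ℕ) : 0 ∈ {k : ℕ | ∀ (m : ℕ) (G : SimpleGraph (Fin m)),
    (t : ℕ∞) ≤ G.chromaticNumber → (allNegK k).IsMinor G.allNeg} := by
  intro m G _
  have hE : IsEmpty ((allNegK 0).E) := by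
    constructor
    intro e
    have := e.1
    exact Sym2.ind (fun a _ => a.elim0) this
  refine ⟨fun _ => false, fun i => i.elim0, fun i => i.elim0, fun i => i.elim0,
    fun e => hE.elim e, fun e => hE.elim e, fun e => hE.elim e⟩

lemma M_set_bddAbove (t : ℕ) : BddAbove {k : ℕ | ∀ (m : ℕ) (G : SimpleGraph (Fin m)),
    (t : ℕ∞) ≤ G.chromaticNumber → G.HasCliqueMinor k} := by
  refine ⟨t, fun k hk => ?_⟩
  have h := hk t (⊤ : SimpleGraph (Fin t)) (by
    rw [SimpleGraph.chromaticNumber_top]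
    simp)
  exact cliqueMinor_card_le h

lemma OM_set_bddAbove (t : ℕ) : BddAbove {k : ℕ | ∀ (m : ℕ) (G : SimpleGraph (Fin m)),
    (t : ℕ∞) ≤ G.chromaticNumber → (allNegK k).IsMinor G.allNeg} := by
  refine ⟨t, fun k hk => ?_⟩
  have h := hk t (⊤ : SimpleGraph (Fin t)) (by
    rw [SimpleGraph.chromaticNumber_top]
    simp)
  exact allNegMinor_card_le h

end Bounds
section Merge

variable {n : ℕ} {G : SimpleGraph (Fin n)}

/-- A good pair: a partition function `P` together with a coloring `c` such that
every edge inside a fiber is properly colored and every fiber is connected. -/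
def GoodPair (G : SimpleGraph (Fin n)) (P : Fin n → Fin n) (c : Fin n → Bool) : Prop :=
  (∀ u v, G.Adj u v → P u = P v → c u ≠ c v) ∧
  (∀ u v, P u = P v → ∃ w : G.Walk u v, ∀ x ∈ w.support, P x = P u)

lemma goodPair_id (G : SimpleGraph (Fin n)) : GoodPair G id (fun _ => false) := by
  constructor
  · intro u v hadj h
    exact absurd h (G.ne_of_adj hadj)
  · intro u v h
    subst h
    exact ⟨SimpleGraph.Walk.nil, by simp⟩

lemma merge_step {P : Fin n → Fin n} {c : Fin n → Bool} (hg : GoodPair G P c)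
    {u0 v0 : Fin n} (hadj : G.Adj u0 v0) (hne : P u0 ≠ P v0) (flip : Bool)
    (hall : ∀ a b, G.Adj a b → P a = P u0 → P b = P v0 → c a ≠ xor (c b) flip) :
    ∃ (P' : Fin n → Fin n) (c' : Fin n → Bool), GoodPair G P' c' ∧
      (Finset.image P Finset.univ).card = (Finset.image P' Finset.univ).card + 1 := by
  classical
  obtain ⟨h1, h2⟩ := hg
  refine ⟨fun v => if P v = P v0 then P u0 else P v,
          fun v => if P v = P v0 then xor (c v) flip else c v, ⟨?_, ?_⟩, ?_⟩
  · -- properness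
    intro u v huv hP'
    by_cases hu : P u = P v0 <;> by_cases hv : P v = P v0 <;> simp only [hu, hv, if_pos, if_neg,
      if_true, if_false] at hP' ⊢
    · -- both in fiber v0
      have : c u ≠ c v := h1 u v huv (hu.trans hv.symm)
      cases flip <;> simp_all
    · -- u in fiber v0, v not: P' v = P v = P u0
      have hvu0 : P v = P u0 := hP'.symm
      have := hall v u huv.symm hvu0 hu
      exact fun h => this h.symm
    · -- v in fiber v0, u not
      have huu0 : P u = P u0 := hP'
      exact hall u v huv huu0 hv
    · exact h1 u v huv hP'
  · -- connectivity
    intro u v hP'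
    have hwalkto : ∀ a : Fin n, (P a = P u0 ∨ P a = P v0) →
        ∃ w : G.Walk a u0, ∀ x ∈ w.support, P x = P u0 ∨ P x = P v0 := by
      intro a ha
      rcases ha with ha | ha
      · obtain ⟨w, hw⟩ := h2 a u0 (by rw [ha])
        exact ⟨w, fun x hx => Or.inl ((hw x hx).trans ha)⟩
      · obtain ⟨w, hw⟩ := h2 a v0 (by rw [ha])
        refine ⟨w.append (SimpleGraph.Walk.cons hadj.symm SimpleGraph.Walk.nil),
          fun x hx => ?_⟩
        rcases (SimpleGraph.Walk.mem_support_append_iff _ _).1 hx with hx | hx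
        · exact Or.inr ((hw x hx).trans ha)
        · simp only [SimpleGraph.Walk.support_cons, SimpleGraph.Walk.support_nil,
            List.mem_cons, List.mem_singleton] at hx
          rcases hx with rfl | hx
          · exact Or.inr rfl
          · rcases hx with rfl | hx
            · exact Or.inl rfl
            · exact absurd hx List.not_mem_nil
    by_cases hu : P u = P u0 ∨ P u = P v0
    · have hPu' : (if P u = P v0 then P u0 else P u) = P u0 := by
        rcases hu with h | h
        · by_cases h' : P u = P v0 <;> simp [h', h]
        · simp [h]
      have hP2 : (if P u = P v0 then P u0 else P u) = (if P v = P v0 then P u0 else P v) := hP'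
      have hv : P v = P u0 ∨ P v = P v0 := by
        by_cases h' : P v = P v0
        · exact Or.inr h'
        · rw [if_neg h', hPu'] at hP2
          exact Or.inl hP2.symm
      obtain ⟨w1, hw1⟩ := hwalkto u hu
      obtain ⟨w2, hw2⟩ := hwalkto v hv
      refine ⟨w1.append w2.reverse, fun x hx => ?_⟩
      have hx' : P x = P u0 ∨ P x = P v0 := by
        rcases (SimpleGraph.Walk.mem_support_append_iff _ _).1 hx with hx | hx
        · exact hw1 x hx
        · exact hw2 x (by rwa [SimpleGraph.Walk.support_reverse, List.mem_reverse] at hx)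
      show (if P x = P v0 then P u0 else P x) = (if P u = P v0 then P u0 else P u)
      rw [hPu']
      rcases hx' with h | h
      · rw [if_neg (by rw [h]; exact hne), h]
      · rw [if_pos h]
    · push_neg at hu
      have hP2 : (if P u = P v0 then P u0 else P u) = (if P v = P v0 then P u0 else P v) := hP'
      rw [if_neg hu.2] at hP2
      have hv' : P v ≠ P v0 := by
        intro h
        rw [if_pos h] at hP2
        exact hu.1 hP2
      rw [if_neg hv'] at hP2
      obtain ⟨w, hw⟩ := h2 u v hP2
      refine ⟨w, fun x hx => ?_⟩
      have hxx := hw x hx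
      show (if P x = P v0 then P u0 else P x) = (if P u = P v0 then P u0 else P u)
      rw [if_neg (by rw [hxx]; exact hu.2), if_neg hu.2, hxx]
  · -- cardinality
    have himg : Finset.image (fun v => if P v = P v0 then P u0 else P v) Finset.univ
        = (Finset.image P Finset.univ).erase (P v0) := by
      ext x
      simp only [Finset.mem_image, Finset.mem_univ, true_and, Finset.mem_erase]
      constructor
      · rintro ⟨a, rfl⟩
        by_cases h : P a = P v0
        · constructor
          · simp [h]; exact fun hh => hne hh
          · exact ⟨u0, by simp [h, hne]⟩
        · constructor
          · simpa [h] using h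
          · exact ⟨a, by simp [h]⟩
      · rintro ⟨hx, a, rfl⟩
        exact ⟨a, by simp [hx]⟩
    rw [himg, Finset.card_erase_of_mem (Finset.mem_image_of_mem P (Finset.mem_univ v0))]
    have hpos : 0 < (Finset.image P Finset.univ).card :=
      Finset.card_pos.2 ⟨P v0, Finset.mem_image_of_mem P (Finset.mem_univ v0)⟩
    omega

end Merge
section LemmaB

lemma allNeg_switch_neg {V : Type} (G : SimpleGraph V) (c : V → Bool) (u v : V)
    (h : G.Adj u v) :
    (G.allNeg.switch c).neg ⟨s(u, v), (G.mem_edgeSet).2 h⟩ = !(xor (c u) (c v)) := by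
  show xor true (Sym2.lift ⟨fun a b => xor (c a) (c b), fun a b => Bool.xor_comm _ _⟩ s(u, v)) = _
  rw [Sym2.lift_mk]
  show xor true (xor (c u) (c v)) = !(xor (c u) (c v))
  cases c u <;> cases c v <;> rfl

set_option maxHeartbeats 1000000 in
lemma allNegMinor_of_cliqueMinorProp {t k : ℕ}
    (hk : ∀ (m : ℕ) (H : SimpleGraph (Fin m)), (t : ℕ∞) ≤ H.chromaticNumber → H.HasCliqueMinor k)
    {n : ℕ} {G : SimpleGraph (Fin n)} (hG : ((2 * t : ℕ) : ℕ∞) ≤ G.chromaticNumber) :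
    (allNegK k).IsMinor G.allNeg := by
  classical
  -- a minimal good pair
  set S : Set ℕ := {m | ∃ (P : Fin n → Fin n) (c : Fin n → Bool),
    GoodPair G P c ∧ (Finset.image P Finset.univ).card = m} with hSdef
  have hSne : S.Nonempty := ⟨_, id, fun _ => false, goodPair_id G, rfl⟩
  obtain ⟨P, c, hg, hcard⟩ := Nat.sInf_mem hSne
  -- key property: adjacent fibers are joined by both a monochromatic and a bichromatic edge
  have hkey : ∀ u0 v0, G.Adj u0 v0 → P u0 ≠ P v0 →
      (∃ a b, G.Adj a b ∧ P a = P u0 ∧ P b = P v0 ∧ c a = c b) ∧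
      (∃ a b, G.Adj a b ∧ P a = P u0 ∧ P b = P v0 ∧ c a ≠ c b) := by
    intro u0 v0 hadj hne
    have hmin : ∀ P' c', GoodPair G P' c' →
        (Finset.image P Finset.univ).card ≠ (Finset.image P' Finset.univ).card + 1 := by
      intro P' c' hg' habs
      have h1 : sInf S ≤ (Finset.image P' Finset.univ).card := Nat.sInf_le ⟨P', c', hg', rfl⟩
      omega
    constructor
    · by_contra h
      push_neg at h
      obtain ⟨P', c', hg', hc⟩ := merge_step hg hadj hne false (by
        intro a b hab ha hb
        simpa using h a b hab ha hb)
      exact hmin P' c' hg' hc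
    · by_contra h
      push_neg at h
      obtain ⟨P', c', hg', hc⟩ := merge_step hg hadj hne true (by
        intro a b hab ha hb
        rw [h a b hab ha hb]
        cases c b <;> simp)
      exact hmin P' c' hg' hc
  -- the quotient graph
  set parts : Finset (Fin n) := Finset.image P Finset.univ with hpartsdef
  have hmem : ∀ v, P v ∈ parts := fun v => Finset.mem_image_of_mem P (Finset.mem_univ v)
  set m : ℕ := parts.card with hmdef
  set Q : Fin n → Fin m := fun v => parts.equivFin ⟨P v, hmem v⟩ with hQdef
  have hQ : ∀ u v, Q u = Q v ↔ P u = P v := by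
    intro u v
    constructor
    · intro h
      have h2 : (⟨P u, hmem u⟩ : {x // x ∈ parts}) = ⟨P v, hmem v⟩ := parts.equivFin.injective h
      exact congrArg Subtype.val h2
    · intro h
      have h2 : (⟨P u, hmem u⟩ : {x // x ∈ parts}) = ⟨P v, hmem v⟩ := Subtype.ext h
      exact congrArg parts.equivFin h2
  have hQsurj : ∀ i : Fin m, ∃ v, Q v = i := by
    intro i
    obtain ⟨a, -, ha⟩ := Finset.mem_image.1 (parts.equivFin.symm i).2
    refine ⟨a, ?_⟩
    show parts.equivFin ⟨P a, hmem a⟩ = i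
    rw [show (⟨P a, hmem a⟩ : {x // x ∈ parts}) = parts.equivFin.symm i from Subtype.ext ha]
    exact parts.equivFin.apply_symm_apply i
  set H : SimpleGraph (Fin m) :=
    SimpleGraph.fromRel (fun i j => ∃ u v, G.Adj u v ∧ Q u = i ∧ Q v = j) with hHdef
  have hHadj : ∀ i j, H.Adj i j → i ≠ j ∧ ∃ u v, G.Adj u v ∧ Q u = i ∧ Q v = j := by
    intro i j h
    rw [hHdef, SimpleGraph.fromRel_adj] at h
    obtain ⟨hne, h | h⟩ := h
    · exact ⟨hne, h⟩
    · obtain ⟨u, v, huv, h1, h2⟩ := h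
      exact ⟨hne, v, u, huv.symm, h2, h1⟩
  have hHadj' : ∀ u v, G.Adj u v → P u ≠ P v → H.Adj (Q u) (Q v) := by
    intro u v huv hne
    rw [hHdef, SimpleGraph.fromRel_adj]
    exact ⟨fun h => hne ((hQ u v).1 h), Or.inl ⟨u, v, huv, rfl, rfl⟩⟩
  -- chromatic bound
  have hchrom : (t : ℕ∞) ≤ H.chromaticNumber := by
    by_contra hlt
    push_neg at hlt
    have hfin : H.chromaticNumber ≠ ⊤ := hlt.ne_top
    set n0 : ℕ := H.chromaticNumber.toNat with hn0def
    have hn0 : (n0 : ℕ∞) = H.chromaticNumber := ENat.coe_toNat hfin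
    have hcol : H.Colorable n0 := SimpleGraph.chromaticNumber_le_iff_colorable.1 hn0.ge
    obtain ⟨CH⟩ := hcol
    have CG : G.Coloring (Fin n0 × Bool) := by
      refine SimpleGraph.Coloring.mk (fun v => (CH (Q v), c v)) ?_
      intro u v hadj heq
      by_cases hPuv : P u = P v
      · exact hg.1 u v hadj hPuv (congrArg Prod.snd heq)
      · exact CH.valid (hHadj' u v hadj hPuv) (congrArg Prod.fst heq)
    have hcolG : G.Colorable (n0 * 2) := by
      have h2 := CG.colorable
      rwa [Fintype.card_prod, Fintype.card_fin, Fintype.card_bool] at h2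
    have hle : G.chromaticNumber ≤ ((n0 * 2 : ℕ) : ℕ∞) := hcolG.chromaticNumber_le
    have h2t : (2 * t : ℕ) ≤ (n0 * 2 : ℕ) := by exact_mod_cast le_trans hG hle
    have htn0 : (t : ℕ∞) ≤ (n0 : ℕ∞) := by exact_mod_cast (by omega : t ≤ n0)
    rw [hn0] at htn0
    exact absurd htn0 (not_le_of_gt hlt)
  obtain ⟨T, hTconn, hTdisj, hTcross⟩ := hk m H hchrom
  set B : Fin k → Set (Fin n) := fun x => {v | Q v ∈ (T x).verts} with hBdef
  -- fibers give good walks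
  have hfiber : ∀ u v, P u = P v →
      (G.allNeg.switch c).HasGoodWalk {x | P x = P u} u v := by
    intro u v huv
    obtain ⟨w, hw⟩ := hg.2 u v huv
    clear huv
    induction w with
    | nil => exact SGraph.hasGoodWalk_refl rfl
    | @cons a a' b hadj' w' ih =>
        have ha' : P a' = P a := hw a' (by
          rw [SimpleGraph.Walk.support_cons]
          exact List.mem_cons_of_mem _ w'.start_mem_support)
        have hstep : (G.allNeg.switch c).HasGoodWalk {x | P x = P a} a a' := by
          refine SGraph.hasGoodWalk_single rfl ha' ⟨s(a, a'), (G.mem_edgeSet).2 hadj'⟩ rfl ?_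
          rw [allNeg_switch_neg G c a a' hadj']
          have hcc : c a ≠ c a' := hg.1 a a' hadj' ha'.symm
          revert hcc
          cases c a <;> cases c a' <;> decide
        refine hstep.trans ?_
        have hsub : {x | P x = P a'} ⊆ {x | P x = P a} := by
          intro y hy
          exact Set.mem_setOf.2 ((Set.mem_setOf.1 hy).trans ha')
        refine SGraph.HasGoodWalk.mono hsub (ih ?_)
        intro x hx
        rw [ha']
        exact hw x (by rw [SimpleGraph.Walk.support_cons]; exact List.mem_cons_of_mem _ hx)
  -- good walks within a branch set
  have hBx : ∀ (x : Fin k) (u : Fin n), Q u ∈ (T x).verts → ∀ y, P y = P u → y ∈ B x := by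
    intro x u hu y hy
    show Q y ∈ (T x).verts
    rwa [(hQ y u).2 hy]
  have hwalk : ∀ (x : Fin k) (aa bb : ↥((T x).verts)), (T x).coe.Reachable aa bb →
      ∀ u v, Q u = aa.1 → Q v = bb.1 → (G.allNeg.switch c).HasGoodWalk (B x) u v := by
    intro x aa bb hr
    obtain ⟨W⟩ := hr
    induction W with
    | nil =>
        rename_i aa'
        intro u v hu hv
        have hPuv : P u = P v := (hQ u v).1 (hu.trans hv.symm)
        refine SGraph.HasGoodWalk.mono ?_ (hfiber u v hPuv)
        intro y hy
        exact hBx x u (hu ▸ aa'.2) y hy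
    | @cons aa' cc' bb' hadj' W' ih =>
        intro u v hu hv
        have hH : H.Adj aa'.1 cc'.1 := (T x).adj_sub hadj'
        obtain ⟨hne', u', v', huv', hQu', hQv'⟩ := hHadj _ _ hH
        have hPne : P u' ≠ P v' := fun h => hne' (hQu' ▸ hQv' ▸ (hQ u' v').2 h)
        obtain ⟨a, b, hab, hpa, hpb, hcab⟩ := (hkey u' v' huv' hPne).2
        have hQa : Q a = aa'.1 := ((hQ a u').2 hpa).trans hQu'
        have hQb : Q b = cc'.1 := ((hQ b v').2 hpb).trans hQv'
        have haB : a ∈ B x := by show Q a ∈ (T x).verts; rw [hQa]; exact aa'.2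
        have hbB : b ∈ B x := by show Q b ∈ (T x).verts; rw [hQb]; exact cc'.2
        have hstep1 : (G.allNeg.switch c).HasGoodWalk (B x) u a := by
          have hPua : P u = P a := (hQ u a).1 (hu.trans hQa.symm)
          refine SGraph.HasGoodWalk.mono ?_ (hfiber u a hPua)
          intro y hy
          exact hBx x u (hu ▸ aa'.2) y hy
        have hstep2 : (G.allNeg.switch c).HasGoodWalk (B x) a b := by
          refine SGraph.hasGoodWalk_single haB hbB ⟨s(a, b), (G.mem_edgeSet).2 hab⟩ rfl ?_
          rw [allNeg_switch_neg G c a b hab]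
          revert hcab
          cases c a <;> cases c b <;> decide
        exact (hstep1.trans hstep2).trans (ih b v hQb hv)
  -- cross (negative) edges
  have hcross : ∀ x y : Fin k, x ≠ y →
      ∃ u v, G.Adj u v ∧ u ∈ B x ∧ v ∈ B y ∧ c u = c v := by
    intro x y hxy
    obtain ⟨i, j, hij, hi, hj⟩ := hTcross x y hxy
    obtain ⟨hne', u', v', huv', hQu', hQv'⟩ := hHadj _ _ hij
    have hPne : P u' ≠ P v' := fun h => hne' (hQu' ▸ hQv' ▸ (hQ u' v').2 h)
    obtain ⟨a, b, hab, hpa, hpb, hcab⟩ := (hkey u' v' huv' hPne).1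
    refine ⟨a, b, hab, ?_, ?_, hcab⟩
    · show Q a ∈ (T x).verts; rw [((hQ a u').2 hpa).trans hQu']; exact hi
    · show Q b ∈ (T y).verts; rw [((hQ b v').2 hpb).trans hQv']; exact hj
  choose U W hUW1 hUW2 hUW3 hUW4 using hcross
  -- representations of the edges of allNegK k
  have hrep : ∀ e : (allNegK k).E, ∃ p : Fin k × Fin k, e.1 = s(p.1, p.2) ∧ p.1 ≠ p.2 := by
    intro e
    obtain ⟨⟨a, b⟩, hab⟩ := Quot.exists_rep e.1
    have hmem' : s(a, b) ∈ (⊤ : SimpleGraph (Fin k)).edgeSet := by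
      rw [show s(a, b) = e.1 from hab]
      exact e.2
    exact ⟨(a, b), hab.symm, ((⊤ : SimpleGraph (Fin k)).mem_edgeSet.1 hmem').ne⟩
  choose rep hrep1 hrep2 using hrep
  have hBeq : ∀ (v : Fin n) (x y : Fin k), v ∈ B x → v ∈ B y → x = y := by
    intro v x y hx hy
    by_contra hxy
    exact Set.disjoint_left.1 (hTdisj hxy) hx hy
  refine ⟨c, B, ?_, ?_, ?_⟩
  · -- PosConnected
    intro x
    obtain ⟨⟨i, hi⟩⟩ := (hTconn x).nonempty
    obtain ⟨v0, hv0⟩ := hQsurj i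
    have hv0B : v0 ∈ B x := by show Q v0 ∈ (T x).verts; rw [hv0]; exact hi
    refine SGraph.posConnected_of_goodWalks ⟨v0, hv0B⟩ ?_
    intro u hu v hv
    exact hwalk x ⟨Q u, hu⟩ ⟨Q v, hv⟩ ((hTconn x).preconnected _ _) u v rfl rfl
  · -- disjointness
    intro x y hxy
    rw [Set.disjoint_left]
    intro v hvx hvy
    exact absurd ((hBeq v x y hvx hvy)) hxy
  · -- edges
    refine ⟨fun e => ⟨s(U (rep e).1 (rep e).2 (hrep2 e), W (rep e).1 (rep e).2 (hrep2 e)),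
      (G.mem_edgeSet).2 (hUW1 _ _ (hrep2 e))⟩, ?_, ?_⟩
    · -- injectivity
      intro e1 e2 h12
      have hval : s(U (rep e1).1 (rep e1).2 (hrep2 e1), W (rep e1).1 (rep e1).2 (hrep2 e1))
          = s(U (rep e2).1 (rep e2).2 (hrep2 e2), W (rep e2).1 (rep e2).2 (hrep2 e2)) :=
        congrArg Subtype.val h12
      apply Subtype.ext
      rw [hrep1 e1, hrep1 e2]
      rcases Sym2.eq_iff.1 hval with ⟨h1, h2⟩ | ⟨h1, h2⟩
      · have hx : (rep e1).1 = (rep e2).1 :=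
          hBeq _ _ _ (hUW2 _ _ (hrep2 e1)) (h1 ▸ hUW2 _ _ (hrep2 e2))
        have hy : (rep e1).2 = (rep e2).2 :=
          hBeq _ _ _ (hUW3 _ _ (hrep2 e1)) (h2 ▸ hUW3 _ _ (hrep2 e2))
        rw [hx, hy]
      · have hx : (rep e1).1 = (rep e2).2 :=
          hBeq _ _ _ (hUW2 _ _ (hrep2 e1)) (h1 ▸ hUW3 _ _ (hrep2 e2))
        have hy : (rep e1).2 = (rep e2).1 :=
          hBeq _ _ _ (hUW3 _ _ (hrep2 e1)) (h2 ▸ hUW2 _ _ (hrep2 e2))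
        rw [hx, hy, Sym2.eq_swap]
    · -- edge conditions
      intro e x y hxy
      have h1 : s((rep e).1, (rep e).2) = s(x, y) := (hrep1 e).symm.trans hxy
      have hsign : (G.allNeg.switch c).neg
          ⟨s(U (rep e).1 (rep e).2 (hrep2 e), W (rep e).1 (rep e).2 (hrep2 e)),
            (G.mem_edgeSet).2 (hUW1 _ _ (hrep2 e))⟩ = true := by
        rw [allNeg_switch_neg G c _ _ (hUW1 _ _ (hrep2 e)), hUW4 _ _ (hrep2 e)]
        cases c (W (rep e).1 (rep e).2 (hrep2 e)) <;> rfl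
      refine ⟨hsign, ?_⟩
      rcases Sym2.eq_iff.1 h1 with ⟨hx, hy⟩ | ⟨hx, hy⟩
      · exact ⟨U (rep e).1 (rep e).2 (hrep2 e), W (rep e).1 (rep e).2 (hrep2 e), rfl,
          hx ▸ hUW2 _ _ (hrep2 e), hy ▸ hUW3 _ _ (hrep2 e)⟩
      · exact ⟨W (rep e).1 (rep e).2 (hrep2 e), U (rep e).1 (rep e).2 (hrep2 e), Sym2.eq_swap,
          hy ▸ hUW3 _ _ (hrep2 e), hx ▸ hUW2 _ _ (hrep2 e)⟩

end LemmaB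
/-- `OM(t) ≤ M(t) ≤ OM(2t)` for every `t`. -/
theorem stmt10 (t : ℕ) : OM t ≤ M t ∧ M t ≤ OM (2 * t) := by
  constructor
  · unfold OM M
    refine csSup_le_csSup (M_set_bddAbove t) ⟨0, zero_mem_OM_set t⟩ ?_
    intro k hk m G hχ
    exact cliqueMinor_of_allNeg_minor (hk m G hχ)
  · unfold OM M
    refine csSup_le_csSup (OM_set_bddAbove (2 * t)) ⟨0, zero_mem_M_set t⟩ ?_
    intro k hk m G hχ
    exact allNegMinor_of_cliqueMinorProp hk hχ
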